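/- For every positive integer n, the number of restricted growth strings of length n equals the number of partitions of an n-element set (equivalently, the number of equivalence relations on Fin n). -/

import Mathlib

/-- A restricted growth string of length `n`: `b 0 = 0` and
`b (i+1) ≤ 1 + max (b 0, …, b i)`. -/
def IsRGS (n : ℕ) (b : Fin n → ℕ) : Prop :=
  (∀ i : Fin n, (i : ℕ) = 0 → b i = 0) ∧
  (∀ (i : Fin n) (hi : (i : ℕ) + 1 < n), b ⟨(i : ℕ) + 1, hi⟩ ≤ 1 + (Finset.Iic i).sup b)

open Finset

variable {n : ℕ}

/-- Minimal element of the `s`-class of `i`. -/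
noncomputable def mfun (s : Setoid (Fin n)) (i : Fin n) : Fin n :=
  letI : DecidablePred (fun j => s.r j i) := Classical.decPred _
  (Finset.univ.filter (fun j => s.r j i)).min' ⟨i, by simpa using s.refl i⟩

lemma mfun_rel (s : Setoid (Fin n)) (i : Fin n) : s.r (mfun s i) i := by
  letI : DecidablePred (fun j => s.r j i) := Classical.decPred _
  have := Finset.min'_mem (Finset.univ.filter (fun j => s.r j i)) ⟨i, by simpa using s.refl i⟩
  simpa [mfun] using this

lemma mfun_le (s : Setoid (Fin n)) {i j : Fin n} (h : s.r j i) : mfun s i ≤ j := by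
  letI : DecidablePred (fun j => s.r j i) := Classical.decPred _
  exact Finset.min'_le _ _ (by simpa using h)

lemma mfun_le_self (s : Setoid (Fin n)) (i : Fin n) : mfun s i ≤ i :=
  mfun_le s (Setoid.refl i)

lemma mfun_congr (s : Setoid (Fin n)) {i j : Fin n} (h : s.r i j) :
    mfun s i = mfun s j := by
  have h1 : s.r (mfun s i) j := Setoid.trans' s (mfun_rel s i) h
  have h2 : s.r (mfun s j) i := Setoid.trans' s (mfun_rel s j) (Setoid.symm' s h)
  exact le_antisymm (mfun_le s h2) (mfun_le s h1)

lemma mfun_idem (s : Setoid (Fin n)) (i : Fin n) : mfun s (mfun s i) = mfun s i :=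
  mfun_congr s (mfun_rel s i)

lemma rel_of_mfun_eq (s : Setoid (Fin n)) {i j : Fin n} (h : mfun s i = mfun s j) :
    s.r i j := by
  have h1 := mfun_rel s i
  have h2 := mfun_rel s j
  rw [h] at h1
  exact Setoid.trans' s (Setoid.symm' s h1) h2

/-- The canonical restricted growth string of a setoid. -/
noncomputable def gfun (s : Setoid (Fin n)) (i : Fin n) : ℕ :=
  ((Finset.Iio (mfun s i)).filter (fun k => mfun s k = k)).card

lemma gfun_mfun (s : Setoid (Fin n)) (i : Fin n) : gfun s (mfun s i) = gfun s i := by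
  simp [gfun, mfun_idem]

lemma gfun_lt (s : Setoid (Fin n)) {i j : Fin n} (h : mfun s i < mfun s j) :
    gfun s i < gfun s j := by
  apply Finset.card_lt_card
  constructor
  · exact Finset.filter_subset_filter _ (Finset.Iio_subset_Iio h.le)
  · intro hsub
    have hmem : mfun s i ∈ (Finset.Iio (mfun s j)).filter (fun k => mfun s k = k) := by
      simp [Finset.mem_filter, h, mfun_idem]
    have := hsub hmem
    simp [Finset.mem_filter] at this
lemma mfun_eq_of_gfun_eq (s : Setoid (Fin n)) {i j : Fin n} (h : gfun s i = gfun s j) :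
    mfun s i = mfun s j := by
  rcases lt_trichotomy (mfun s i) (mfun s j) with hl | he | hr
  · exact absurd h (gfun_lt s hl).ne
  · exact he
  · exact absurd h.symm (gfun_lt s hr).ne

lemma gfun_eq_iff (s : Setoid (Fin n)) (i j : Fin n) :
    gfun s i = gfun s j ↔ s.r i j := by
  constructor
  · exact fun h => rel_of_mfun_eq s (mfun_eq_of_gfun_eq s h)
  · intro h; rw [gfun, gfun, mfun_congr s h]

lemma gfun_zero (s : Setoid (Fin n)) (i : Fin n) (h : (i : ℕ) = 0) : gfun s i = 0 := by
  have hm : ((mfun s i : Fin n) : ℕ) = 0 := by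
    have := mfun_le_self s i
    rw [Fin.le_def, h] at this
    omega
  rw [gfun, Finset.card_eq_zero, Finset.filter_eq_empty_iff]
  intro k hk
  rw [Finset.mem_Iio, Fin.lt_def, hm] at hk
  omega

/-- When `i` is the minimum of its class, `gfun s i` is exactly one more than the
sup of `gfun s` over the previous indices. -/
lemma gfun_succ_eq (s : Setoid (Fin n)) (i ip : Fin n) (t : ℕ)
    (hti : (i : ℕ) = t + 1) (hip : (ip : ℕ) = t) (hm : mfun s i = i) :
    gfun s i = 1 + (Finset.Iic ip).sup (gfun s) := by
  set F := (Finset.Iio i).filter (fun k => mfun s k = k) with hF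
  have hgF : gfun s i = F.card := by rw [gfun, hm]
  have hn0 : 0 < n := i.pos
  have hz : (⟨0, hn0⟩ : Fin n) ∈ F := by
    have hm0 : mfun s (⟨0, hn0⟩ : Fin n) = ⟨0, hn0⟩ := by
      have := mfun_le_self s (⟨0, hn0⟩ : Fin n)
      rw [Fin.le_def] at this
      exact Fin.ext (by simpa using this)
    simp [hF, Finset.mem_filter, Finset.mem_Iio, Fin.lt_def, hm0, hti]
  set k := F.max' ⟨_, hz⟩ with hk
  have hkF : k ∈ F := Finset.max'_mem _ _
  have hkfix : mfun s k = k := (Finset.mem_filter.mp hkF).2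
  have hklt : k < i := by
    have := (Finset.mem_filter.mp hkF).1
    simpa using this
  have hkle : k ≤ ip := by
    rw [Fin.le_def, hip]
    have := Fin.lt_def.mp hklt
    omega
  have hFeq : F = insert k ((Finset.Iio k).filter (fun u => mfun s u = u)) := by
    ext x
    simp only [Finset.mem_insert, Finset.mem_filter, Finset.mem_Iio]
    constructor
    · intro hx
      have hxk : x ≤ k := Finset.le_max' _ _ hx
      rcases eq_or_lt_of_le hxk with he | hlt
      · exact Or.inl he
      · exact Or.inr ⟨hlt, (Finset.mem_filter.mp hx).2⟩
    · rintro (rfl | ⟨hlt, hfix⟩)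
      · exact hkF
      · exact Finset.mem_filter.mpr ⟨Finset.mem_Iio.mpr (hlt.trans hklt), hfix⟩
  have hcard : F.card = 1 + gfun s k := by
    rw [hFeq, Finset.card_insert_of_notMem (by simp), gfun, hkfix]
    omega
  have hsup : (Finset.Iic ip).sup (gfun s) = gfun s k := by
    apply le_antisymm
    · apply Finset.sup_le
      intro u hu
      have humem : mfun s u ∈ F := by
        refine Finset.mem_filter.mpr ⟨Finset.mem_Iio.mpr ?_, mfun_idem s u⟩
        have h1 := Fin.le_def.mp (mfun_le_self s u)
        have h2 := Fin.le_def.mp (Finset.mem_Iic.mp hu)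
        rw [Fin.lt_def, hti]
        omega
      have hmk : mfun s u ≤ k := Finset.le_max' _ _ humem
      calc gfun s u = ((Finset.Iio (mfun s u)).filter (fun v => mfun s v = v)).card := rfl
        _ ≤ ((Finset.Iio k).filter (fun v => mfun s v = v)).card :=
            Finset.card_le_card (Finset.filter_subset_filter _ (Finset.Iio_subset_Iio hmk))
        _ = gfun s k := by rw [gfun, hkfix]
    · exact Finset.le_sup (Finset.mem_Iic.mpr hkle)
  rw [hgF, hcard, hsup]

lemma isRGS_gfun (s : Setoid (Fin n)) : IsRGS n (gfun s) := by
  refine ⟨gfun_zero s, ?_⟩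
  intro i hi
  set i' : Fin n := ⟨(i : ℕ) + 1, hi⟩ with hi'
  by_cases h : mfun s i' = i'
  · rw [gfun_succ_eq s i' i (i : ℕ) rfl rfl h]
  · have hlt : mfun s i' < i' := lt_of_le_of_ne (mfun_le_self s i') h
    have hle : mfun s i' ≤ i := by
      rw [Fin.le_def]
      have h1 := Fin.lt_def.mp hlt
      have h2 : (i' : ℕ) = (i : ℕ) + 1 := rfl
      omega
    have h1 : gfun s i' = gfun s (mfun s i') := (gfun_mfun s i').symm
    have h2 : gfun s (mfun s i') ≤ (Finset.Iic i).sup (gfun s) :=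
      Finset.le_sup (Finset.mem_Iic.mpr hle)
    omega

lemma fin_Iic_succ (t : ℕ) (ht : t + 1 < n) :
    Finset.Iic (⟨t + 1, ht⟩ : Fin n) =
      insert (⟨t + 1, ht⟩ : Fin n) (Finset.Iic (⟨t, by omega⟩ : Fin n)) := by
  ext x
  simp only [Finset.mem_Iic, Finset.mem_insert, Fin.le_def, Fin.ext_iff]
  omega

/-- Every value up to the running max is attained by an RGS. -/
lemma rgs_values (b : Fin n → ℕ) (hb : IsRGS n b) :
    ∀ (t : ℕ) (ht : t < n) (v : ℕ), v ≤ (Finset.Iic (⟨t, ht⟩ : Fin n)).sup b →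
      ∃ j : Fin n, j ≤ ⟨t, ht⟩ ∧ b j = v := by
  intro t
  induction t with
  | zero =>
    intro ht v hv
    have h0 : Finset.Iic (⟨0, ht⟩ : Fin n) = {(⟨0, ht⟩ : Fin n)} := by
      ext x
      simp only [Finset.mem_Iic, Finset.mem_singleton, Fin.le_def, Fin.ext_iff]
      omega
    rw [h0, Finset.sup_singleton, hb.1 _ rfl] at hv
    exact ⟨⟨0, ht⟩, le_refl _, by rw [hb.1 _ rfl]; omega⟩
  | succ t ih =>
    intro ht v hv
    have htn : t < n := by omega
    rw [fin_Iic_succ t ht, Finset.sup_insert] at hv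
    rcases le_or_gt v ((Finset.Iic (⟨t, by omega⟩ : Fin n)).sup b) with hle | hgt
    · obtain ⟨j, hj, hbj⟩ := ih htn v hle
      refine ⟨j, ?_, hbj⟩
      have h1 := Fin.le_def.mp hj
      have e1 : ((⟨t + 1, ht⟩ : Fin n) : ℕ) = t + 1 := rfl
      have e2 : ((⟨t, htn⟩ : Fin n) : ℕ) = t := rfl
      rw [Fin.le_def]
      omega
    · have hvb : v ≤ b ⟨t + 1, ht⟩ := by
        rcases le_sup_iff.mp hv with h | h
        · exact h
        · omega
      have hstep := hb.2 ⟨t, htn⟩ (by simpa using ht)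
      have hbd : b ⟨t + 1, ht⟩ ≤ 1 + (Finset.Iic (⟨t, htn⟩ : Fin n)).sup b := hstep
      have hsame : (Finset.Iic (⟨t, htn⟩ : Fin n)).sup b
          = (Finset.Iic (⟨t, by omega⟩ : Fin n)).sup b := rfl
      refine ⟨⟨t + 1, ht⟩, le_refl _, ?_⟩
      omega

lemma rgs_eq_gfun (b : Fin n → ℕ) (hb : IsRGS n b) (i : Fin n) :
    b i = gfun (Setoid.ker b) i := by
  set s := Setoid.ker b with hs
  have hker : ∀ x y : Fin n, s.r x y ↔ b x = b y := fun _ _ => Iff.rfl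
  have H : ∀ c : ℕ, ∀ i : Fin n, (i : ℕ) = c → b i = gfun s i := by
    intro c
    induction c using Nat.strong_induction_on with
    | _ c ihc =>
    intro i hic
    have ih : ∀ j : Fin n, j < i → b j = gfun s j := fun j hj =>
      ihc (j : ℕ) (by rw [← hic]; exact Fin.lt_def.mp hj) j rfl
    by_cases hm : mfun s i = i
    · by_cases h0 : (i : ℕ) = 0
      · rw [hb.1 i h0, gfun_zero s i h0]
      · have hti : (i : ℕ) = ((i : ℕ) - 1) + 1 := by omega
        set t := (i : ℕ) - 1 with htdef
        have htn : t < n := by omega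
        set ip : Fin n := ⟨t, htn⟩ with hip
        have hgi := gfun_succ_eq s i ip t hti rfl hm
        have hsupeq : (Finset.Iic ip).sup b = (Finset.Iic ip).sup (gfun s) := by
          apply Finset.sup_congr rfl
          intro j hj
          apply ih
          rw [Fin.lt_def]
          have := Fin.le_def.mp (Finset.mem_Iic.mp hj)
          have h2 : (ip : ℕ) = t := rfl
          omega
        have hlt' : (ip : ℕ) + 1 < n := by
          have h2 : (ip : ℕ) = t := rfl
          omega
        have hub : b i ≤ 1 + (Finset.Iic ip).sup b := by
          have hstep := hb.2 ip hlt'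
          have h2 : (⟨(ip : ℕ) + 1, hlt'⟩ : Fin n) = i := by
            apply Fin.ext
            simp only []
            have h5 : ((⟨t, htn⟩ : Fin n) : ℕ) = t := rfl
            omega
          rw [h2] at hstep
          exact hstep
        have hlb : (Finset.Iic ip).sup b < b i := by
          by_contra hc
          push_neg at hc
          obtain ⟨j, hj, hbj⟩ := rgs_values b hb t htn (b i) hc
          have hrel : s.r j i := (hker j i).mpr hbj
          have hle2 : mfun s i ≤ j := mfun_le s hrel
          rw [hm] at hle2
          have h3 := Fin.le_def.mp hle2
          have h4 := Fin.le_def.mp hj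
          have h5 : ((⟨t, htn⟩ : Fin n) : ℕ) = t := rfl
          omega
        rw [hgi, ← hsupeq]
        omega
    · have hlt : mfun s i < i := lt_of_le_of_ne (mfun_le_self s i) hm
      have h1 : b (mfun s i) = b i := (hker _ _).mp (mfun_rel s i)
      rw [← h1, ih (mfun s i) hlt, gfun_mfun]
  exact H (i : ℕ) i rfl

lemma ker_gfun (s : Setoid (Fin n)) : Setoid.ker (gfun s) = s :=
  Setoid.ext fun x y => gfun_eq_iff s x y

/-- For every positive `n`, the number of restricted growth strings of length `n` equals
the number of partitions of an `n`-element set (equivalence relations on `Fin n`). -/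
theorem rgs_count_eq_bell (n : ℕ) (hn : 0 < n) :
    Nat.card {b : Fin n → ℕ // IsRGS n b} = Nat.card (Setoid (Fin n)) := by
  apply Nat.card_eq_of_bijective (fun b => Setoid.ker b.1)
  constructor
  · intro x y h
    refine Subtype.ext (funext fun i => ?_)
    have hx := rgs_eq_gfun x.1 x.2 i
    have hy := rgs_eq_gfun y.1 y.2 i
    simp only at h
    rw [hx, hy, h]
  · intro s
    exact ⟨⟨gfun s, isRGS_gfun s⟩, ker_gfun s⟩
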